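/- Define, for a ∈ [0, 1/2], K^{Ridge}(a) = (4 cos²(πa), −1, −1/2) / (4 cos(2πa) + cos(4πa) + 5). Then for every a ∈ [0, 1/2], K^{Ridge}(a) · F(2πa·t, 0)|_{t=1} satisfies: K^{Ridge}(a) · F(q) = 1 where q = (2πa, 0), and moreover K^{Ridge}(a) lies in the plane K₂ = 2K₃. -/

import Mathlib

open Real

noncomputable def Fvec (q : ℝ × ℝ) : ℝ × ℝ × ℝ :=
  (2 * Real.cos q.1 + 2 * Real.cos q.2,
   2 * Real.cos (q.1 - q.2) + 2 * Real.cos (q.1 + q.2),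
   2 * Real.cos (2 * q.1) + 2 * Real.cos (2 * q.2))

def dot3 (K F : ℝ × ℝ × ℝ) : ℝ := K.1 * F.1 + K.2.1 * F.2.1 + K.2.2 * F.2.2

noncomputable def Kridge (a : ℝ) : ℝ × ℝ × ℝ :=
  ((4 * Real.cos (π * a) ^ 2) / (4 * Real.cos (2 * π * a) + Real.cos (4 * π * a) + 5),
   (-1) / (4 * Real.cos (2 * π * a) + Real.cos (4 * π * a) + 5),
   (-(1/2)) / (4 * Real.cos (2 * π * a) + Real.cos (4 * π * a) + 5))

theorem ridge_on_striped_plane (a : ℝ) (ha : a ∈ Set.Icc (0 : ℝ) (1/2)) :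
    dot3 (Kridge a) (Fvec (2 * π * a, 0)) = 1 ∧
    (Kridge a).2.1 = 2 * (Kridge a).2.2 := by
  have h2 : (2 : ℝ) * π * a = 2 * (π * a) := by ring
  have h4 : (4 : ℝ) * π * a = 2 * (2 * π * a) := by ring
  have hc2 : Real.cos (2 * π * a) = 2 * Real.cos (π * a) ^ 2 - 1 := by
    rw [h2, Real.cos_two_mul]
  have hc4 : Real.cos (4 * π * a) = 2 * Real.cos (2 * π * a) ^ 2 - 1 := by
    rw [h4, Real.cos_two_mul]
  set c := Real.cos (2 * π * a) with hc
  have hD : 4 * c + Real.cos (4 * π * a) + 5 = 2 * (c + 1) ^ 2 + 2 := by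
    rw [hc4]; ring
  have hDne : 4 * c + Real.cos (4 * π * a) + 5 ≠ 0 := by
    rw [hD]; positivity
  constructor
  · simp only [dot3, Kridge, Fvec, sub_zero, add_zero, mul_zero, Real.cos_zero]
    have hdup : Real.cos (2 * (2 * π * a)) = 2 * c ^ 2 - 1 := by
      rw [Real.cos_two_mul]
    have hcc : 4 * Real.cos (π * a) ^ 2 = 2 * (c + 1) := by rw [hc2]; ring
    rw [hdup, hcc, hc4, ← hc]
    clear_value c
    have hne : (4 * c + (2 * c ^ 2 - 1) + 5 : ℝ) ≠ 0 := by nlinarith [sq_nonneg (c + 1)]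
    rw [div_mul_eq_mul_div, div_mul_eq_mul_div, div_mul_eq_mul_div, ← add_div,
      ← add_div, div_eq_one_iff_eq hne]
    ring
  · simp only [Kridge, hc]
    field_simp
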